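/- Let X = (I−B)⁻¹N with B having acyclic support, and fix a vertex j. If S is any set of indices consisting only of non-descendants of j in the graph of B, then the noise variable N_j is independent of the subvector X_S. -/

import Mathlib

open Matrix MeasureTheory ProbabilityTheory

section Aux

variable {p : ℕ} (B : Matrix (Fin p) (Fin p) ℝ)

/-- adjacency matrix -/
private noncomputable def Adj : Matrix (Fin p) (Fin p) ℝ :=
  Matrix.of fun j k => if B j k ≠ 0 then (1 : ℝ) else 0

private lemma adj_pow_nonneg (m : ℕ) (i k : Fin p) : 0 ≤ ((Adj B) ^ m) i k := by
  induction m generalizing i k with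
  | zero => simp [Matrix.one_apply]; positivity
  | succ m ih =>
      rw [pow_succ', Matrix.mul_apply]
      refine Finset.sum_nonneg fun l _ => mul_nonneg ?_ (ih l k)
      simp only [Adj, Matrix.of_apply]
      positivity

private lemma pow_support (m : ℕ) (i k : Fin p) (h : ((Adj B) ^ m) i k = 0) :
    (B ^ m) i k = 0 := by
  induction m generalizing i k with
  | zero => simpa using h
  | succ m ih =>
      rw [pow_succ', Matrix.mul_apply] at h ⊢
      have h0 := (Finset.sum_eq_zero_iff_of_nonneg (fun l _ =>
        mul_nonneg (by simp only [Adj, Matrix.of_apply]; positivity)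
          (adj_pow_nonneg B m l k))).mp h
      refine Finset.sum_eq_zero fun l _ => ?_
      have := h0 l (Finset.mem_univ l)
      rcases mul_eq_zero.mp this with hA | hA
      · simp only [Adj, Matrix.of_apply, ite_eq_right_iff] at hA
        by_cases hB : B i l = 0
        · simp [hB]
        · exact absurd (hA hB) one_ne_zero
      · simp [ih l k hA]

private lemma B_nilpotent (hAdj : IsNilpotent (Adj B)) : IsNilpotent B := by
  obtain ⟨n, hn⟩ := hAdj
  exact ⟨n, by ext i k; exact pow_support B n i k (by simp [hn])⟩

/-- nonzero entry of `B^m` gives a path -/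
private lemma pow_path (m : ℕ) (s j : Fin p) (h : (B ^ m) s j ≠ 0) :
    (m = 0 ∧ s = j) ∨ Relation.TransGen (fun k l => B l k ≠ 0) j s := by
  induction m generalizing s with
  | zero =>
      left
      refine ⟨rfl, ?_⟩
      by_contra hne
      simp [Matrix.one_apply, hne] at h
  | succ m ih =>
      rw [pow_succ', Matrix.mul_apply] at h
      obtain ⟨l, -, hl⟩ := Finset.exists_ne_zero_of_sum_ne_zero h
      have hBl : B s l ≠ 0 := fun h0 => hl (by simp [h0])
      have hml : (B ^ m) l j ≠ 0 := fun h0 => hl (by simp [h0])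
      rcases ih l hml with ⟨-, rfl⟩ | hp
      · exact Or.inr (Relation.TransGen.single hBl)
      · exact Or.inr (hp.tail hBl)

private lemma geom_inv (hB : IsNilpotent B) (n : ℕ) (hn : B ^ n = 0) :
    (1 - B)⁻¹ = ∑ m ∈ Finset.range n, B ^ m := by
  have gen : ∀ m : ℕ, (1 - B) * ∑ i ∈ Finset.range m, B ^ i = 1 - B ^ m := by
    intro m
    induction m with
    | zero => simp
    | succ m ih =>
        have hc : B * B ^ m = B ^ m * B := (Commute.pow_self B m).eq.symm
        rw [Finset.sum_range_succ, mul_add, ih, sub_mul, one_mul, pow_succ, hc]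
        abel
  have key : (1 - B) * ∑ m ∈ Finset.range n, B ^ m = 1 := by
    rw [gen, hn, sub_zero]
  exact Matrix.inv_eq_right_inv key

end Aux

/-- Let `X = (I-B)⁻¹ N` with `B` of acyclic support, the components of `N`
independent, and fix a vertex `j`. If `S` consists only of non-descendants of
`j` (in the graph with an edge `k → l` iff `B l k ≠ 0`), then the noise
variable `N_j` is independent of the subvector `X_S`. -/
theorem noise_indep_nondescendants
    (p : ℕ) (B : Matrix (Fin p) (Fin p) ℝ)
    (hAdj : IsNilpotent (Matrix.of fun j k => if B j k ≠ 0 then (1 : ℝ) else 0))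
    (Ω : Type*) [MeasureSpace Ω] (μ : Measure Ω) [IsProbabilityMeasure μ]
    (N : Ω → Fin p → ℝ)
    (hmeas : ∀ i, Measurable fun ω => N ω i)
    (hindep : iIndepFun (fun i ω => N ω i) μ)
    (X : Ω → Fin p → ℝ) (hX : ∀ ω, X ω = (1 - B)⁻¹ *ᵥ N ω)
    (j : Fin p) (S : Finset (Fin p))
    -- every element of `S` is a non-descendant of `j`:
    (hS : ∀ s ∈ S, s ≠ j ∧ ¬ Relation.TransGen (fun k l => B l k ≠ 0) j s) :
    IndepFun (fun ω => N ω j) (fun ω (s : S) => X ω s) μ := by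
  classical
  have hBnil : IsNilpotent B := B_nilpotent B hAdj
  obtain ⟨n, hn⟩ := hBnil
  set M : Matrix (Fin p) (Fin p) ℝ := (1 - B)⁻¹ with hM
  have hMsum : M = ∑ m ∈ Finset.range n, B ^ m := geom_inv B ⟨n, hn⟩ n hn
  -- key: M s j = 0 for s ∈ S
  have hMzero : ∀ s ∈ S, M s j = 0 := by
    intro s hs
    obtain ⟨hsj, hpath⟩ := hS s hs
    rw [hMsum]
    simp only [Matrix.sum_apply]
    refine Finset.sum_eq_zero fun m _ => ?_
    by_contra h
    rcases pow_path B m s j h with ⟨-, rfl⟩ | hp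
    · exact hsj rfl
    · exact hpath hp
  -- the two finsets
  have hdisj : Disjoint ({j} : Finset (Fin p)) ({j}ᶜ : Finset (Fin p)) :=
    disjoint_compl_right
  have hind := hindep.indepFun_finset {j} {j}ᶜ hdisj hmeas
  -- compose with measurable maps
  have hjmem : j ∈ ({j} : Finset (Fin p)) := Finset.mem_singleton_self j
  set φ : (({j} : Finset (Fin p)) → ℝ) → ℝ := fun v => v ⟨j, hjmem⟩ with hφ
  set ψ : ((({j}ᶜ : Finset (Fin p)) : Type) → ℝ) → (S → ℝ) :=
    fun v s => ∑ k : ({j}ᶜ : Finset (Fin p)), M s.1 k.1 * v k with hψ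
  have hφm : Measurable φ := measurable_pi_apply _
  have hψm : Measurable ψ := by
    refine measurable_pi_lambda _ fun s => ?_
    exact Finset.measurable_sum _ fun k _ => (measurable_pi_apply k).const_mul _
  have hcomp := hind.comp hφm hψm
  have heq1 : (fun ω => N ω j) = φ ∘ (fun a (i : ({j} : Finset (Fin p))) => N a i) := rfl
  have heq2 : (fun ω (s : S) => X ω s)
      = ψ ∘ (fun a (i : ({j}ᶜ : Finset (Fin p))) => N a i) := by
    funext ω s
    have hMsj := hMzero s.1 s.2
    simp only [Function.comp_apply, hψ, hX ω, Matrix.mulVec, dotProduct]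
    rw [Finset.sum_coe_sort ({j}ᶜ : Finset (Fin p)) (fun k => M s.1 k * N ω k)]
    symm
    apply Finset.sum_subset (Finset.subset_univ _)
    intro k _ hk
    have hkj : k = j := by simpa using hk
    rw [hkj, hMsj, zero_mul]
  rw [heq1, heq2]
  exact hcomp
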